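/- Let γ ∈ (1/2, 1) and ε ∈ (0,1). Let T be a continuous linear operator on the real Hilbert space L²((ε,1)) (with Lebesgue measure) satisfying, for every g ∈ L²((ε,1)) and almost every x ∈ (ε,1), Tg(x) = ∫_ε^1 (min(x,y))^{−γ} (max(x,y))^{−(1−γ)} g(y) dy. Then the operator norm of T satisfies ‖T‖² ≥ (ε^{1−2γ}/(2γ−1)²) · (1 − ε^{2γ−1} + 2(2γ−1) ε^{2γ−1} log ε). -/

import Mathlib

open MeasureTheory

section Aux

open Real Set

lemma integral_rpow_Ioo {a b r : ℝ} (ha : 0 < a) (hab : a ≤ b) (hr : r ≠ -1) :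
    ∫ x in Ioo a b, x ^ r = (b ^ (r + 1) - a ^ (r + 1)) / (r + 1) := by
  rw [← integral_Ioc_eq_integral_Ioo, ← intervalIntegral.integral_of_le hab]
  refine integral_rpow (Or.inr ⟨hr, fun h => ?_⟩)
  rcases Set.mem_uIcc.mp h with ⟨h1, _⟩ | ⟨_, h2⟩ <;> linarith

lemma integral_inv_Ioo {a b : ℝ} (ha : 0 < a) (hab : a ≤ b) :
    ∫ x in Ioo a b, x⁻¹ = Real.log b - Real.log a := by
  rw [← integral_Ioc_eq_integral_Ioo, ← intervalIntegral.integral_of_le hab,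
    integral_inv (fun h => ?_), Real.log_div (ne_of_gt (lt_of_lt_of_le ha hab)) (ne_of_gt ha)]
  rcases Set.mem_uIcc.mp h with ⟨h1, _⟩ | ⟨_, h2⟩ <;> linarith

lemma integrableOn_rpow_Ioo {a b r : ℝ} (ha : 0 < a) (hr : r ≤ 0) :
    IntegrableOn (fun x : ℝ => x ^ r) (Set.Ioo a b) volume := by
  haveI : IsFiniteMeasure (volume.restrict (Set.Ioo a b)) :=
    ⟨by rw [Measure.restrict_apply_univ]; exact measure_Ioo_lt_top⟩
  rw [IntegrableOn, ← memLp_one_iff_integrable]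
  refine MemLp.of_bound (by fun_prop) (a ^ r) ?_
  rw [ae_restrict_iff' measurableSet_Ioo]
  filter_upwards with x hx
  rw [Real.norm_eq_abs, abs_of_nonneg (Real.rpow_nonneg (ha.trans hx.1).le r)]
  exact Real.rpow_le_rpow_of_nonpos ha hx.1.le hr

end Aux

set_option maxHeartbeats 1000000 in
/-- For `γ ∈ (1/2, 1)` and `ε ∈ (0,1)`, the preferential-attachment
integral operator `Tg(x) = ∫_ε^1 (x∧y)^{−γ} (x∨y)^{−(1−γ)} g(y) dy` on `L²((ε,1))`
satisfies `‖T‖² ≥ (ε^{1−2γ}/(2γ−1)²)(1 − ε^{2γ−1} + 2(2γ−1) ε^{2γ−1} log ε)`. -/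
theorem opNorm_PA_operator_lower (γ ε : ℝ) (hγ : γ ∈ Set.Ioo (1 / 2 : ℝ) 1)
    (hε : ε ∈ Set.Ioo (0 : ℝ) 1)
    (T : Lp ℝ 2 (volume.restrict (Set.Ioo ε 1)) →L[ℝ] Lp ℝ 2 (volume.restrict (Set.Ioo ε 1)))
    (hT : ∀ g : Lp ℝ 2 (volume.restrict (Set.Ioo ε 1)),
      ∀ᵐ x ∂(volume.restrict (Set.Ioo ε 1)),
        (T g : ℝ → ℝ) x = ∫ y in Set.Ioo ε 1,
          (min x y) ^ (-γ) * (max x y) ^ (-(1 - γ)) * g y) :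
    ε ^ (1 - 2 * γ) / (2 * γ - 1) ^ 2
        * (1 - ε ^ (2 * γ - 1) + 2 * (2 * γ - 1) * ε ^ (2 * γ - 1) * Real.log ε)
      ≤ ‖T‖ ^ 2 := by
  obtain ⟨hγl, hγu⟩ := hγ
  obtain ⟨hε0, hε1⟩ := hε
  have hc : (0:ℝ) < 2 * γ - 1 := by linarith
  haveI : IsFiniteMeasure (volume.restrict (Set.Ioo ε (1:ℝ))) :=
    ⟨by rw [Measure.restrict_apply_univ]; exact measure_Ioo_lt_top⟩
  set u := ε ^ (1 - 2*γ) with hu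
  set v := ε ^ (2*γ - 1) with hv
  set L := Real.log ε with hL
  have hu0 : 0 < u := Real.rpow_pos_of_pos hε0 _
  have huv : u * v = 1 := by
    rw [hu, hv, ← Real.rpow_add hε0]
    norm_num
  have hu1 : 1 < u := by
    rw [hu]
    exact Real.one_lt_rpow_iff_of_pos hε0 |>.mpr (Or.inr ⟨hε1, by linarith⟩)
  have hexp : 0 ≤ u - 1 + (2*γ-1) * L := by
    have h1 : u = Real.exp (L * (1 - 2*γ)) := by
      rw [hu, hL, Real.rpow_def_of_pos hε0]
    have h2 := Real.add_one_le_exp (L * (1 - 2*γ))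
    rw [← h1] at h2
    nlinarith
  -- the test function f(y) = y^(-γ)
  have hfm : MemLp (fun y : ℝ => y ^ (-γ)) 2 (volume.restrict (Set.Ioo ε 1)) := by
    refine MemLp.of_bound (by fun_prop) (ε ^ (-γ)) ?_
    rw [ae_restrict_iff' measurableSet_Ioo]
    filter_upwards with x hx
    rw [Real.norm_eq_abs, abs_of_nonneg (Real.rpow_nonneg (hε0.trans hx.1).le _)]
    exact Real.rpow_le_rpow_of_nonpos hε0 hx.1.le (by linarith)
  set g : Lp ℝ 2 (volume.restrict (Set.Ioo ε 1)) := hfm.toLp _ with hg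
  -- squared norm of g
  have hI3 : ∫ x in Set.Ioo ε 1, x ^ (-(2*γ)) = (u - 1) / (2*γ-1) := by
    rw [integral_rpow_Ioo hε0 hε1.le (show -(2*γ) ≠ -1 from fun h => by linarith)]
    rw [show -(2*γ) + 1 = 1 - 2*γ by ring, Real.one_rpow, ← hu]
    rw [div_eq_div_iff (by linarith) (by linarith)]
    ring
  have hgnorm : ‖g‖ ^ 2 = (u - 1) / (2*γ-1) := by
    rw [← real_inner_self_eq_norm_sq, L2.inner_def, ← hI3]
    refine integral_congr_ae ?_
    filter_upwards [hfm.coeFn_toLp,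
      (ae_restrict_mem measurableSet_Ioo :
        ∀ᵐ x ∂(volume.restrict (Set.Ioo ε 1)), x ∈ Set.Ioo ε 1)] with x hx hmem
    have hx0 : (0:ℝ) < x := hε0.trans hmem.1
    rw [RCLike.inner_apply, RCLike.conj_to_real, hx, ← Real.rpow_add hx0,
      show -γ + -γ = -(2*γ) by ring]
  have hgnorm_pos : 0 < ‖g‖ ^ 2 := by
    rw [hgnorm]; apply div_pos <;> linarith
  -- pointwise a.e. lower bound on T g
  set φ : ℝ → ℝ := fun x => (u * x ^ (γ-1) - x ^ (-γ)) / (2*γ-1) with hφ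
  have hφnonneg : ∀ x ∈ Set.Ioo ε (1:ℝ), 0 ≤ φ x := by
    intro x hx
    have hx0 : (0:ℝ) < x := hε0.trans hx.1
    have h1 : x ^ (-γ) = x ^ (γ-1) * x ^ (1-2*γ) := by
      rw [← Real.rpow_add hx0]; congr 1; ring
    have h2 : x ^ (1-2*γ) ≤ u := by
      rw [hu]; exact Real.rpow_le_rpow_of_nonpos hε0 hx.1.le (by linarith)
    have h3 : x ^ (γ-1) * x ^ (1-2*γ) ≤ x ^ (γ-1) * u :=
      mul_le_mul_of_nonneg_left h2 (Real.rpow_nonneg hx0.le _)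
    have h4 : 0 ≤ u * x ^ (γ-1) - x ^ (-γ) := by rw [h1]; linarith
    simp only [hφ]
    positivity
  have key : ∀ᵐ x ∂(volume.restrict (Set.Ioo ε 1)), φ x ≤ (T g : ℝ → ℝ) x := by
    filter_upwards [hT g,
      (ae_restrict_mem measurableSet_Ioo :
        ∀ᵐ x ∂(volume.restrict (Set.Ioo ε 1)), x ∈ Set.Ioo ε 1)] with x hx hmem
    rw [hx]
    obtain ⟨hxε, hx1⟩ := hmem
    have hx0 : (0:ℝ) < x := hε0.trans hxε
    set K : ℝ → ℝ := fun y => (min x y) ^ (-γ) * (max x y) ^ (-(1 - γ)) * y ^ (-γ) with hK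
    have hstep1 : ∫ y in Set.Ioo ε 1, (min x y) ^ (-γ) * (max x y) ^ (-(1 - γ)) * (g : ℝ → ℝ) y
        = ∫ y in Set.Ioo ε 1, K y := by
      refine integral_congr_ae ?_
      filter_upwards [hfm.coeFn_toLp] with y hy
      simp only [hK]
      rw [hy]
    have hKnonneg : ∀ y ∈ Set.Ioo ε (1:ℝ), 0 ≤ K y := by
      intro y hy
      have hy0 : (0:ℝ) < y := hε0.trans hy.1
      have h1 : (0:ℝ) < min x y := lt_min hx0 hy0
      have h2 : (0:ℝ) < max x y := lt_of_lt_of_le h1 min_le_max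
      simp only [hK]
      positivity
    have hKint : IntegrableOn K (Set.Ioo ε 1) volume := by
      rw [IntegrableOn, ← memLp_one_iff_integrable]
      refine MemLp.of_bound ?_ (ε ^ (-γ) * ε ^ (-(1-γ)) * ε ^ (-γ)) ?_
      · simp only [hK]
        apply Measurable.aestronglyMeasurable
        fun_prop
      · rw [ae_restrict_iff' measurableSet_Ioo]
        filter_upwards with y hy
        have hy0 : (0:ℝ) < y := hε0.trans hy.1
        have hεmin : ε ≤ min x y := le_min hxε.le hy.1.le
        have hεmax : ε ≤ max x y := le_trans hεmin min_le_max
        have h1 : min x y ^ (-γ) ≤ ε ^ (-γ) :=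
          Real.rpow_le_rpow_of_nonpos hε0 hεmin (by linarith)
        have h2 : max x y ^ (-(1-γ)) ≤ ε ^ (-(1-γ)) :=
          Real.rpow_le_rpow_of_nonpos hε0 hεmax (by linarith)
        have h3 : y ^ (-γ) ≤ ε ^ (-γ) :=
          Real.rpow_le_rpow_of_nonpos hε0 hy.1.le (by linarith)
        rw [Real.norm_eq_abs, abs_of_nonneg (hKnonneg y hy)]
        simp only [hK]
        have hmin0 : (0:ℝ) ≤ min x y ^ (-γ) := Real.rpow_nonneg (le_trans hε0.le hεmin) _
        have hmax0 : (0:ℝ) ≤ max x y ^ (-(1-γ)) := Real.rpow_nonneg (le_trans hε0.le hεmax) _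
        have hf0 : (0:ℝ) ≤ y ^ (-γ) := Real.rpow_nonneg hy0.le _
        have hε1' : (0:ℝ) ≤ ε ^ (-γ) := Real.rpow_nonneg hε0.le _
        have hε2' : (0:ℝ) ≤ ε ^ (-(1-γ)) := Real.rpow_nonneg hε0.le _
        calc min x y ^ (-γ) * max x y ^ (-(1-γ)) * y ^ (-γ)
            ≤ ε ^ (-γ) * ε ^ (-(1-γ)) * y ^ (-γ) := by
              apply mul_le_mul_of_nonneg_right _ hf0
              exact mul_le_mul h1 h2 hmax0 hε1'
          _ ≤ ε ^ (-γ) * ε ^ (-(1-γ)) * ε ^ (-γ) := by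
              apply mul_le_mul_of_nonneg_left h3
              positivity
    have hsub : ∫ y in Set.Ioo ε x, K y ≤ ∫ y in Set.Ioo ε 1, K y := by
      refine setIntegral_mono_set hKint ?_
        (HasSubset.Subset.eventuallyLE (Set.Ioo_subset_Ioo le_rfl hx1.le))
      filter_upwards [ae_restrict_mem measurableSet_Ioo] with y hy
      exact hKnonneg y hy
    have hcomp : ∫ y in Set.Ioo ε x, K y = φ x := by
      have h1 : ∫ y in Set.Ioo ε x, K y = ∫ y in Set.Ioo ε x, x ^ (γ-1) * y ^ (-(2*γ)) := by
        refine setIntegral_congr_fun measurableSet_Ioo (fun y hy => ?_)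
        have hy0 : (0:ℝ) < y := hε0.trans hy.1
        simp only [hK]
        rw [min_eq_right hy.2.le, max_eq_left hy.2.le,
          show -(1-γ) = γ - 1 by ring,
          mul_comm (y ^ (-γ)) (x ^ (γ-1)), mul_assoc, ← Real.rpow_add hy0,
          show -γ + -γ = -(2*γ) by ring]
      rw [h1, integral_const_mul,
        integral_rpow_Ioo hε0 hxε.le (show -(2*γ) ≠ -1 from fun h => by linarith),
        show -(2*γ) + 1 = 1 - 2*γ by ring]
      have hxx : x ^ (γ-1) * x ^ (1-2*γ) = x ^ (-γ) := by
        rw [← Real.rpow_add hx0]; congr 1; ring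
      have hflip : (x ^ (1-2*γ) - ε ^ (1-2*γ)) / (1-2*γ) = (u - x ^ (1-2*γ)) / (2*γ-1) := by
        rw [← hu, div_eq_div_iff (by linarith) (by linarith)]; ring
      rw [hflip, ← mul_div_assoc]
      simp only [hφ]
      congr 1
      linear_combination (-1 : ℝ) * hxx
    calc φ x = ∫ y in Set.Ioo ε x, K y := hcomp.symm
      _ ≤ ∫ y in Set.Ioo ε 1, K y := hsub
      _ = _ := hstep1.symm
  -- ‖T g‖² as an integral
  have hTgnorm : ∫ x, ((T g : ℝ → ℝ) x) ^ 2 ∂(volume.restrict (Set.Ioo ε 1)) = ‖T g‖ ^ 2 := by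
    rw [← real_inner_self_eq_norm_sq, L2.inner_def]
    refine integral_congr_ae ?_
    filter_upwards with x
    rw [RCLike.inner_apply, RCLike.conj_to_real]
    exact pow_two _
  -- pointwise formula for φ²
  have hφsq : ∀ x ∈ Set.Ioo ε (1:ℝ), φ x ^ 2
      = (u^2 * x ^ (2*γ-2) - 2*u * x⁻¹ + x ^ (-(2*γ))) / (2*γ-1)^2 := by
    intro x hx
    have hx0 : (0:ℝ) < x := hε0.trans hx.1
    have q1 : x ^ (γ-1) * x ^ (γ-1) = x ^ (2*γ-2) := by
      rw [← Real.rpow_add hx0]; congr 1; ring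
    have q2 : x ^ (γ-1) * x ^ (-γ) = x⁻¹ := by
      rw [← Real.rpow_add hx0, show γ - 1 + -γ = -1 by ring, Real.rpow_neg_one]
    have q3 : x ^ (-γ) * x ^ (-γ) = x ^ (-(2*γ)) := by
      rw [← Real.rpow_add hx0]; congr 1; ring
    simp only [hφ, div_pow]
    congr 1
    linear_combination u^2 * q1 - 2*u*q2 + q3
  have e1 := (integrableOn_rpow_Ioo (b := 1) hε0 (show 2*γ-2 ≤ 0 by linarith)).const_mul (u^2)
  have e2' : IntegrableOn (fun x : ℝ => 2*u * x⁻¹) (Set.Ioo ε 1) volume := by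
    have h := (integrableOn_rpow_Ioo (b := 1) hε0 (show (-1:ℝ) ≤ 0 by norm_num)).const_mul (2*u)
    exact IntegrableOn.congr_fun h (fun x hx => by rw [Real.rpow_neg_one]) measurableSet_Ioo
  have e3 := integrableOn_rpow_Ioo (b := 1) hε0 (show -(2*γ) ≤ 0 by linarith)
  -- integrability of φ²
  have hφint : Integrable (fun x => φ x ^ 2) (volume.restrict (Set.Ioo ε 1)) := by
    have h1 : IntegrableOn
        (fun x : ℝ => (u^2 * x ^ (2*γ-2) - 2*u * x⁻¹ + x ^ (-(2*γ))) / (2*γ-1)^2)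
        (Set.Ioo ε 1) volume := ((e1.sub e2').add e3).div_const _
    exact IntegrableOn.congr_fun h1 (fun x hx => (hφsq x hx).symm) measurableSet_Ioo
  -- exact value of ∫ φ²
  have hφ2 : ∫ x, φ x ^ 2 ∂(volume.restrict (Set.Ioo ε 1))
      = (u^2 * ((1 - v)/(2*γ-1)) + 2*u*L + (u-1)/(2*γ-1)) / (2*γ-1)^2 := by
    have h1 : ∫ x, φ x ^ 2 ∂(volume.restrict (Set.Ioo ε 1)) = ∫ x in Set.Ioo ε 1,
        (u^2 * x ^ (2*γ-2) - 2*u * x⁻¹ + x ^ (-(2*γ))) / (2*γ-1)^2 :=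
      setIntegral_congr_fun measurableSet_Ioo (fun x hx => hφsq x hx)
    have e12 : Integrable (fun x : ℝ => u^2 * x ^ (2*γ-2) - 2*u * x⁻¹)
        (volume.restrict (Set.Ioo ε 1)) := e1.sub e2'
    rw [h1, integral_div, integral_add e12 e3, integral_sub e1 e2',
      integral_const_mul, integral_const_mul, hI3, integral_inv_Ioo hε0 hε1.le,
      integral_rpow_Ioo hε0 hε1.le (show 2*γ-2 ≠ -1 from fun h => by linarith),
      show 2*γ-2 + 1 = 2*γ-1 by ring, Real.one_rpow, Real.log_one, ← hv, ← hL]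
    ring
  have hmono : ∫ x, φ x ^ 2 ∂(volume.restrict (Set.Ioo ε 1))
      ≤ ∫ x, ((T g : ℝ → ℝ) x) ^ 2 ∂(volume.restrict (Set.Ioo ε 1)) := by
    refine integral_mono_ae hφint ((Lp.memLp (T g)).integrable_sq) ?_
    filter_upwards [key,
      (ae_restrict_mem measurableSet_Ioo :
        ∀ᵐ x ∂(volume.restrict (Set.Ioo ε 1)), x ∈ Set.Ioo ε 1)] with x hx hmem
    exact pow_le_pow_left₀ (hφnonneg x hmem) hx 2
  have hop : ‖T g‖ ^ 2 ≤ ‖T‖ ^ 2 * ‖g‖ ^ 2 := by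
    rw [← mul_pow]
    exact pow_le_pow_left₀ (norm_nonneg _) (T.le_opNorm g) 2
  -- final algebraic computation
  have hveq : v = 1/u := by
    rw [eq_div_iff (ne_of_gt hu0)]
    linarith [huv]
  have hfinal : (u / (2 * γ - 1) ^ 2 * (1 - v + 2 * (2 * γ - 1) * v * L)) * ‖g‖ ^ 2
      ≤ ∫ x, φ x ^ 2 ∂(volume.restrict (Set.Ioo ε 1)) := by
    rw [hφ2, hgnorm, hveq]
    have hc3 : (0:ℝ) < (2*γ-1)^3 := by positivity
    have hcne : (2*γ-1 : ℝ) ≠ 0 := ne_of_gt hc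
    have hune : u ≠ 0 := ne_of_gt hu0
    have hlhs : (u / (2 * γ - 1) ^ 2 * (1 - 1/u + 2 * (2 * γ - 1) * (1/u) * L)) * ((u-1)/(2*γ-1))
        = ((u - 1 + 2*(2*γ-1)*L) * (u-1)) / (2*γ-1)^3 := by
      field_simp
    have hrhs : (u^2 * ((1 - 1/u)/(2*γ-1)) + 2*u*L + (u-1)/(2*γ-1)) / (2*γ-1)^2
        = ((u*(u-1) + 2*(2*γ-1)*u*L) + (u-1)) / (2*γ-1)^3 := by
      field_simp
    rw [hlhs, hrhs, div_le_div_iff_of_pos_right hc3]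
    nlinarith [hexp]
  have hchain := le_trans hfinal (le_trans hmono (le_trans (le_of_eq hTgnorm) hop))
  exact le_of_mul_le_mul_right hchain hgnorm_pos
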